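/- arXiv:1702.04121 — 4 statements merged into one kernel-verified Lean document; each statement's English description precedes it below -/
import Mathlib

section
/- Let n be a positive integer, let x, z, y ∈ ℝⁿ, and let A be a real n×n matrix with zᵀAx ≠ 0. Define ŷ = (Ax)/(zᵀAx) and f(A) = (1/2)‖y − (Ax)/(zᵀAx)‖₂². Then f is differentiable at A with respect to the entries of A, and the gradient matrix of f at A (the n×n matrix whose (i,j) entry is ∂f/∂A_{ij}) equals ((z ŷᵀ − I)/(zᵀAx)) (y − ŷ) xᵀ, where I is the n×n identity matrix. -/
open Matrix

attribute [local instance] Matrix.normedAddCommGroup Matrix.normedSpace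

/-- Lemma 1 (main-text form): the one-step inference gradient of the PSR
squared prediction loss `f(A) = (1/2) ‖y − (Ax)/(zᵀAx)‖²` is
`((z ŷᵀ − I)/(zᵀAx)) (y − ŷ) xᵀ`. The partial derivative `∂f/∂A_{ij}` is
formalized as the derivative at `t = 0` of `t ↦ f (A + t E_{ij})` where
`E_{ij}` is the standard basis matrix. -/
theorem one_step_inference_gradient (n : ℕ) (hn : 0 < n) (x z y : Fin n → ℝ)
    (A : Matrix (Fin n) (Fin n) ℝ)
    (h : z ⬝ᵥ A.mulVec x ≠ 0)
    (yhat : Fin n → ℝ) (hy : yhat = (z ⬝ᵥ A.mulVec x)⁻¹ • A.mulVec x)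
    (G : Matrix (Fin n) (Fin n) ℝ)
    (hG : G = vecMulVec
      (((z ⬝ᵥ A.mulVec x)⁻¹ • (vecMulVec z yhat - 1)).mulVec (y - yhat)) x) :
    DifferentiableAt ℝ
      (fun M : Matrix (Fin n) (Fin n) ℝ =>
        (1 / 2) * ∑ k, (y k - ((z ⬝ᵥ M.mulVec x)⁻¹ • M.mulVec x) k) ^ 2) A ∧
    ∀ i j, HasDerivAt
      (fun t : ℝ =>
        (1 / 2) * ∑ k, (y k -
          ((z ⬝ᵥ (A + t • single i j (1 : ℝ)).mulVec x)⁻¹ •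
            (A + t • single i j (1 : ℝ)).mulVec x) k) ^ 2)
      (G i j) 0 := by
  set s0 : ℝ := z ⬝ᵥ A.mulVec x with hs0
  set u : Fin n → ℝ := A.mulVec x with hu
  -- differentiability of basic linear pieces
  have hentry : ∀ (k l : Fin n), DifferentiableAt ℝ
      (fun M : Matrix (Fin n) (Fin n) ℝ => M k l) A :=
    fun k l => (Matrix.entryLinearMap ℝ ℝ k l).toContinuousLinearMap.differentiableAt
  have hcomp : ∀ k : Fin n, DifferentiableAt ℝ
      (fun M : Matrix (Fin n) (Fin n) ℝ => M.mulVec x k) A := by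
    intro k
    have : (fun M : Matrix (Fin n) (Fin n) ℝ => M.mulVec x k)
        = fun M => ∑ l, M k l * x l := by
      funext M; simp [Matrix.mulVec, dotProduct]
    rw [this]
    exact DifferentiableAt.fun_sum fun l _ => (hentry k l).mul_const _
  have hdot : DifferentiableAt ℝ
      (fun M : Matrix (Fin n) (Fin n) ℝ => z ⬝ᵥ M.mulVec x) A := by
    have : (fun M : Matrix (Fin n) (Fin n) ℝ => z ⬝ᵥ M.mulVec x)
        = fun M => ∑ k, z k * M.mulVec x k := by
      funext M; simp [dotProduct]
    rw [this]
    exact DifferentiableAt.fun_sum fun k _ => (hcomp k).const_mul _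
  constructor
  · apply DifferentiableAt.const_mul
    apply DifferentiableAt.fun_sum
    intro k _
    apply DifferentiableAt.pow
    apply DifferentiableAt.const_sub
    have : (fun M : Matrix (Fin n) (Fin n) ℝ =>
        ((z ⬝ᵥ M.mulVec x)⁻¹ • M.mulVec x) k)
        = fun M => (z ⬝ᵥ M.mulVec x)⁻¹ * M.mulVec x k := by
      funext M; simp
    rw [this]
    exact (hdot.inv h).mul (hcomp k)
  · intro i j
    set a : ℝ := z i * x j with ha
    set b : Fin n → ℝ := fun k => if k = i then x j else 0 with hb
    have hE : ∀ (t : ℝ) (k : Fin n),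
        ((A + t • single i j (1 : ℝ)).mulVec x) k = u k + t * b k := by
      intro t k
      simp only [Matrix.add_mulVec, Matrix.smul_mulVec, single_mulVec,
        Pi.add_apply, Pi.smul_apply, Function.update_apply, one_mul, Pi.zero_apply,
        smul_eq_mul, hb, hu]
    have hS : ∀ t : ℝ,
        z ⬝ᵥ (A + t • single i j (1 : ℝ)).mulVec x = s0 + t * a := by
      intro t
      have h1 : z ⬝ᵥ (A + t • single i j (1 : ℝ)).mulVec x
          = ∑ k, z k * (u k + t * b k) := by
        simp only [dotProduct]
        exact Finset.sum_congr rfl fun k _ => by rw [hE]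
      rw [h1]
      have h3 : ∀ k : Fin n, z k * (u k + t * b k)
          = z k * u k + (if k = i then z k * (t * x j) else 0) := by
        intro k; simp only [hb]; split_ifs <;> ring
      rw [Finset.sum_congr rfl fun k _ => h3 k, Finset.sum_add_distrib,
        Finset.sum_ite_eq' Finset.univ i]
      simp only [Finset.mem_univ, if_pos, hs0, dotProduct, ha, hu]
      ring
    have hfun : (fun t : ℝ =>
        (1 / 2) * ∑ k, (y k -
          ((z ⬝ᵥ (A + t • single i j (1 : ℝ)).mulVec x)⁻¹ •
            (A + t • single i j (1 : ℝ)).mulVec x) k) ^ 2)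
        = fun t => (1 / 2) * ∑ k, (y k - (s0 + t * a)⁻¹ * (u k + t * b k)) ^ 2 := by
      funext t
      congr 1
      apply Finset.sum_congr rfl
      intro k _
      rw [Pi.smul_apply, smul_eq_mul, hS, hE]
    rw [hfun]
    -- derivative of each piece
    have hden : HasDerivAt (fun t : ℝ => s0 + t * a) a 0 :=
      (hasDerivAt_mul_const a).const_add s0
    have hne : s0 + 0 * a ≠ 0 := by simpa using h
    have hterm : ∀ k : Fin n, HasDerivAt
        (fun t : ℝ => (y k - (s0 + t * a)⁻¹ * (u k + t * b k)) ^ 2)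
        (2 * (y k - s0⁻¹ * u k) * (-((b k * s0 - u k * a) / s0 ^ 2))) 0 := by
      intro k
      have hnum : HasDerivAt (fun t : ℝ => u k + t * b k) (b k) 0 :=
        (hasDerivAt_mul_const (b k)).const_add (u k)
      have hq : HasDerivAt (fun t : ℝ => (u k + t * b k) / (s0 + t * a))
          ((b k * (s0 + 0 * a) - (u k + 0 * b k) * a) / (s0 + 0 * a) ^ 2) 0 :=
        hnum.div hden hne
      have hq' : HasDerivAt (fun t : ℝ => (s0 + t * a)⁻¹ * (u k + t * b k))
          ((b k * s0 - u k * a) / s0 ^ 2) 0 := by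
        have := hq
        simp only [zero_mul, add_zero] at this
        convert this using 2 with t
        · rw [inv_mul_eq_div]
      have h2 : HasDerivAt (fun t : ℝ => y k - (s0 + t * a)⁻¹ * (u k + t * b k))
          (-((b k * s0 - u k * a) / s0 ^ 2)) 0 := hq'.const_sub (y k)
      have h3 := h2.fun_pow 2
      simp only [Nat.cast_ofNat, pow_one, zero_mul, add_zero, mul_zero] at h3
      refine h3.congr_deriv (Eq.symm ?_)
      rw [inv_mul_eq_div]
      ring
    have hsum : HasDerivAt
        (fun t : ℝ => ∑ k, (y k - (s0 + t * a)⁻¹ * (u k + t * b k)) ^ 2)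
        (∑ k, 2 * (y k - s0⁻¹ * u k) * (-((b k * s0 - u k * a) / s0 ^ 2))) 0 :=
      HasDerivAt.fun_sum (fun k _ => hterm k)
    have hfin := hsum.const_mul (1 / 2 : ℝ)
    refine hfin.congr_deriv (Eq.symm ?_)
    -- value identification
    rw [hG, hy]
    rw [Finset.mul_sum]
    simp only [vecMulVec_apply, Matrix.mulVec, dotProduct]
    rw [Finset.sum_mul]
    apply Finset.sum_congr rfl
    intro k _
    simp only [Pi.smul_apply, smul_eq_mul, Matrix.smul_apply, Matrix.sub_apply,
      vecMulVec_apply, Matrix.one_apply, Pi.sub_apply, hb, ha]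
    rcases eq_or_ne k i with rfl | hk
    · simp only [if_pos rfl]
      field_simp
      simp only [if_true]
      ring
    · simp only [if_neg hk, if_neg (Ne.symm hk)]
      field_simp
      ring
end

section
/- Let n be a positive integer, let x, z, y ∈ ℝⁿ, and let A be a real n×n matrix with zᵀAx ≠ 0. Define ŷ = (Ax)/(zᵀAx) and f(A) = (1/2)‖y − (Ax)/(zᵀAx)‖₂². Then f is differentiable at A with respect to the entries of A, and the gradient matrix of f at A equals ((z xᵀ Aᵀ − (zᵀAx) I)/(zᵀAx)²) (y − ŷ) xᵀ, where I is the n×n identity matrix. -/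
open Matrix

attribute [local instance] Matrix.normedAddCommGroup Matrix.normedSpace

/-- Lemma 1 (Appendix A form): the one-step inference gradient of the PSR
squared prediction loss `f(A) = (1/2) ‖y − (Ax)/(zᵀAx)‖²` is
`((z xᵀ Aᵀ − (zᵀAx) I)/(zᵀAx)²) (y − ŷ) xᵀ`. -/
theorem one_step_inference_gradient_appendix (n : ℕ) (hn : 0 < n)
    (x z y : Fin n → ℝ)
    (A : Matrix (Fin n) (Fin n) ℝ)
    (h : z ⬝ᵥ A.mulVec x ≠ 0)
    (yhat : Fin n → ℝ) (hy : yhat = (z ⬝ᵥ A.mulVec x)⁻¹ • A.mulVec x)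
    (G : Matrix (Fin n) (Fin n) ℝ)
    (hG : G = vecMulVec
      ((((z ⬝ᵥ A.mulVec x) ^ 2)⁻¹ •
        (vecMulVec z x * Aᵀ -
          (z ⬝ᵥ A.mulVec x) • (1 : Matrix (Fin n) (Fin n) ℝ))).mulVec
        (y - yhat)) x) :
    DifferentiableAt ℝ
      (fun M : Matrix (Fin n) (Fin n) ℝ =>
        (1 / 2) * ∑ k, (y k - ((z ⬝ᵥ M.mulVec x)⁻¹ • M.mulVec x) k) ^ 2) A ∧
    ∀ i j, HasDerivAt
      (fun t : ℝ =>
        (1 / 2) * ∑ k, (y k -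
          ((z ⬝ᵥ (A + t • single i j (1 : ℝ)).mulVec x)⁻¹ •
            (A + t • single i j (1 : ℝ)).mulVec x) k) ^ 2)
      (G i j) 0 := by
  have hmv : Differentiable ℝ (fun M : Matrix (Fin n) (Fin n) ℝ => M.mulVec x) :=
    (LinearMap.toContinuousLinearMap
      { toFun := fun M => M.mulVec x
        map_add' := fun M N => Matrix.add_mulVec M N x
        map_smul' := fun c M => Matrix.smul_mulVec c M x }).differentiable
  have hdot : Differentiable ℝ (fun M : Matrix (Fin n) (Fin n) ℝ => z ⬝ᵥ M.mulVec x) :=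
    (LinearMap.toContinuousLinearMap
      { toFun := fun M : Matrix (Fin n) (Fin n) ℝ => z ⬝ᵥ M.mulVec x
        map_add' := fun M N => by simp [Matrix.add_mulVec]
        map_smul' := fun c M => by simp [Matrix.smul_mulVec] }).differentiable
  constructor
  · apply DifferentiableAt.const_mul
    apply DifferentiableAt.fun_sum
    intro k _
    apply DifferentiableAt.fun_pow
    apply DifferentiableAt.const_sub
    have h1 : DifferentiableAt ℝ (fun M : Matrix (Fin n) (Fin n) ℝ => (z ⬝ᵥ M.mulVec x)⁻¹) A :=
      (hdot A).inv h
    have h2 : DifferentiableAt ℝ (fun M : Matrix (Fin n) (Fin n) ℝ => M.mulVec x k) A :=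
      (differentiable_pi.mp hmv k) A
    simpa [Pi.smul_apply, smul_eq_mul] using h1.fun_mul h2
  · intro i j
    set c : ℝ := z ⬝ᵥ A.mulVec x with hc
    set a : Fin n → ℝ := A.mulVec x with ha
    set b : ℝ := z i * x j with hb
    set d : Fin n → ℝ := fun k => if k = i then x j else 0 with hd
    have hEd : (Matrix.single i j (1:ℝ)).mulVec x = d := by
      funext k
      simp [Matrix.mulVec, dotProduct, Matrix.single, ite_and, eq_comm, hd]
    have hzd : z ⬝ᵥ d = b := by
      simp [hd, dotProduct, hb]
    have hfun : (fun t : ℝ =>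
        (1 / 2) * ∑ k, (y k -
          ((z ⬝ᵥ (A + t • single i j (1 : ℝ)).mulVec x)⁻¹ •
            (A + t • single i j (1 : ℝ)).mulVec x) k) ^ 2)
        = fun t : ℝ => (1 / 2) * ∑ k, (y k - (a k + t * d k) / (c + t * b)) ^ 2 := by
      funext t
      congr 1
      apply Finset.sum_congr rfl
      intro k _
      have hv : (A + t • single i j (1 : ℝ)).mulVec x = a + t • d := by
        rw [Matrix.add_mulVec, Matrix.smul_mulVec, hEd]
      rw [hv]
      have hz : z ⬝ᵥ (a + t • d) = c + t * b := by
        rw [dotProduct_add, dotProduct_smul, hzd, smul_eq_mul]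
      rw [hz]
      simp [Pi.smul_apply, smul_eq_mul, div_eq_inv_mul, Pi.add_apply]
    rw [hfun]
    have hc0 : c + (0:ℝ) * b ≠ 0 := by simpa using h
    have hcc : c ≠ 0 := h
    have key : ∀ k : Fin n, HasDerivAt (fun t : ℝ => (y k - (a k + t * d k) / (c + t * b)) ^ 2)
        (2 * (y k - (a k + 0 * d k) / (c + 0 * b)) ^ 1 *
          (0 - (d k * (c + 0 * b) - (a k + 0 * d k) * b) / (c + 0 * b) ^ 2)) 0 := by
      intro k
      have h1 : HasDerivAt (fun t : ℝ => a k + t * d k) (d k) 0 := by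
        simpa using (hasDerivAt_mul_const (d k)).const_add (a k)
      have h2 : HasDerivAt (fun t : ℝ => c + t * b) b 0 := by
        simpa using (hasDerivAt_mul_const b).const_add c
      have hq := h1.div h2 hc0
      have hs := hq.const_sub (y k)
      have := hs.fun_pow 2
      simpa using this
    have hsum := HasDerivAt.fun_sum (fun k (_ : k ∈ Finset.univ) => key k)
    have hmul := hsum.const_mul (1/2 : ℝ)
    convert hmul using 1
    case e'_4 => rfl
    case e'_5 => rfl
    -- now: G i j = (1/2) * ∑ k, ...
    have hGij : G i j = (c ^ 2)⁻¹ *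
        ((z i * ∑ k, (y k - c⁻¹ * a k) * a k) - c * (y i - c⁻¹ * a i)) * x j := by
      rw [hG, vecMulVec_apply]
      congr 1
      rw [Matrix.smul_mulVec, Pi.smul_apply, smul_eq_mul]
      congr 1
      have hyh : ∀ k, y k - yhat k = y k - c⁻¹ * a k := by
        intro k; simp [hy, Pi.smul_apply, smul_eq_mul]
      simp only [Matrix.sub_mulVec, Matrix.smul_mulVec, Matrix.one_mulVec,
        Pi.sub_apply, Pi.smul_apply, smul_eq_mul]
      rw [hyh i]
      congr 1
      simp only [Matrix.mulVec, dotProduct, Matrix.mul_apply, vecMulVec_apply,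
        Matrix.transpose_apply, Pi.sub_apply]
      rw [Finset.mul_sum]
      apply Finset.sum_congr rfl
      intro k _
      have hak : (∑ l, z i * x l * A k l) = z i * a k := by
        rw [ha]
        simp only [Matrix.mulVec, dotProduct, Finset.mul_sum]
        exact Finset.sum_congr rfl fun l _ => by ring
      rw [hak, hyh k]
      ring
    rw [hGij]
    have hdk : ∀ k : Fin n, 2 * (y k - (a k + 0 * d k) / (c + 0 * b)) ^ 1 *
          (0 - (d k * (c + 0 * b) - (a k + 0 * d k) * b) / (c + 0 * b) ^ 2)
        = (2 * b / c ^ 2) * ((y k - c⁻¹ * a k) * a k) - (2 / c) * ((y k - c⁻¹ * a k) * d k) := by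
      intro k
      field_simp
      ring
    simp only [hdk]
    rw [Finset.sum_sub_distrib, ← Finset.mul_sum, ← Finset.mul_sum]
    have hdsum : ∑ k, (y k - c⁻¹ * a k) * d k = (y i - c⁻¹ * a i) * x j := by
      simp [hd, mul_ite, mul_zero]
    rw [hdsum]
    field_simp
    ring
end

section
/- Let n be a positive integer, let x, z, y ∈ ℝⁿ, and let A, B be real n×n matrices with zᵀBAx ≠ 0. Define ŷ = (BAx)/(zᵀBAx) and g(A) = (1/2)‖y − (BAx)/(zᵀBAx)‖₂². Then g is differentiable at A with respect to the entries of A, and the gradient matrix of g at A (the n×n matrix whose (i,j) entry is ∂g/∂A_{ij}) equals ((Bᵀ z xᵀ Aᵀ Bᵀ − (zᵀBAx) Bᵀ)/(zᵀBAx)²) (y − ŷ) xᵀ, which also equals Bᵀ ((z ŷᵀ − I)/(zᵀBAx)) (y − ŷ) xᵀ, where I is the n×n identity matrix. -/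
open Matrix

attribute [local instance] Matrix.normedAddCommGroup Matrix.normedSpace

private theorem keyline (n : ℕ) (x : Fin n → ℝ) (A B : Matrix (Fin n) (Fin n) ℝ)
    (i j : Fin n) (t : ℝ) (k : Fin n) :
    (B * (A + t • single i j (1:ℝ))).mulVec x k
      = (B * A).mulVec x k + t * (B k i * x j) := by
  have h1 : (B * (A + t • single i j (1:ℝ))).mulVec x
      = (B * A).mulVec x + t • (B * single i j (1:ℝ)).mulVec x := by
    rw [Matrix.mul_add, Matrix.add_mulVec, Matrix.mul_smul, Matrix.smul_mulVec]
  rw [h1]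
  have h2 : (B * single i j (1:ℝ)).mulVec x k = B k i * x j := by
    rw [← Matrix.mulVec_mulVec, Matrix.single_mulVec]
    simp [Matrix.mulVec, dotProduct, Function.update_apply]
  simp [h2]

private theorem keymat (n : ℕ) (x z : Fin n → ℝ) (A B : Matrix (Fin n) (Fin n) ℝ)
    (i k : Fin n) :
    (Bᵀ * vecMulVec z x * Aᵀ * Bᵀ) i k = (∑ m, z m * B m i) * (B * A).mulVec x k := by
  simp only [Matrix.mul_apply, vecMulVec_apply, Matrix.mulVec, dotProduct, transpose_apply,
    Finset.sum_mul, Finset.mul_sum]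
  rw [Finset.sum_comm]
  exact Finset.sum_congr rfl fun a _ => Finset.sum_congr rfl fun b _ =>
    Finset.sum_congr rfl fun c _ => by ring

/-- Appendix B matrix-calculus identity underlying Lemma 2: the gradient of
`g(A) = (1/2) ‖y − (BAx)/(zᵀBAx)‖²` with respect to `A` equals
`((Bᵀ z xᵀ Aᵀ Bᵀ − (zᵀBAx) Bᵀ)/(zᵀBAx)²) (y − ŷ) xᵀ`, which also equals
`Bᵀ ((z ŷᵀ − I)/(zᵀBAx)) (y − ŷ) xᵀ`. -/
theorem multi_step_inference_gradient (n : ℕ) (hn : 0 < n)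
    (x z y : Fin n → ℝ)
    (A B : Matrix (Fin n) (Fin n) ℝ)
    (h : z ⬝ᵥ (B * A).mulVec x ≠ 0)
    (yhat : Fin n → ℝ)
    (hy : yhat = (z ⬝ᵥ (B * A).mulVec x)⁻¹ • (B * A).mulVec x)
    (G₁ G₂ : Matrix (Fin n) (Fin n) ℝ)
    (hG₁ : G₁ = vecMulVec
      ((((z ⬝ᵥ (B * A).mulVec x) ^ 2)⁻¹ •
        (Bᵀ * vecMulVec z x * Aᵀ * Bᵀ -
          (z ⬝ᵥ (B * A).mulVec x) • Bᵀ)).mulVec (y - yhat)) x)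
    (hG₂ : G₂ = vecMulVec
      ((Bᵀ * ((z ⬝ᵥ (B * A).mulVec x)⁻¹ •
        (vecMulVec z yhat - 1))).mulVec (y - yhat)) x) :
    DifferentiableAt ℝ
      (fun M : Matrix (Fin n) (Fin n) ℝ =>
        (1 / 2) * ∑ k, (y k -
          ((z ⬝ᵥ (B * M).mulVec x)⁻¹ • (B * M).mulVec x) k) ^ 2) A ∧
    (∀ i j, HasDerivAt
      (fun t : ℝ =>
        (1 / 2) * ∑ k, (y k -
          ((z ⬝ᵥ (B * (A + t • single i j (1 : ℝ))).mulVec x)⁻¹ •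
            (B * (A + t • single i j (1 : ℝ))).mulVec x) k) ^ 2)
      (G₁ i j) 0) ∧
    G₁ = G₂ := by
  -- abbreviations
  have hcoord : ∀ (a b : Fin n),
      DifferentiableAt ℝ (fun M : Matrix (Fin n) (Fin n) ℝ => M a b) A := by
    intro a b
    exact (((ContinuousLinearMap.proj b : ((Fin n) → ℝ) →L[ℝ] ℝ).comp
      (ContinuousLinearMap.proj a :
        (Matrix (Fin n) (Fin n) ℝ) →L[ℝ] ((Fin n) → ℝ))).differentiable).differentiableAt
  have hv : ∀ k : Fin n,
      DifferentiableAt ℝ (fun M : Matrix (Fin n) (Fin n) ℝ => (B * M).mulVec x k) A := by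
    intro k
    have hrw : (fun M : Matrix (Fin n) (Fin n) ℝ => (B * M).mulVec x k)
        = fun M => ∑ l, (∑ m, B k m * M m l) * x l := by
      funext M; simp [Matrix.mulVec, Matrix.mul_apply, dotProduct]
    rw [hrw]
    exact DifferentiableAt.fun_sum fun l _ =>
      (DifferentiableAt.fun_sum fun m _ =>
        (differentiableAt_const _).fun_mul (hcoord m l)).fun_mul (differentiableAt_const _)
  have hc : DifferentiableAt ℝ
      (fun M : Matrix (Fin n) (Fin n) ℝ => z ⬝ᵥ (B * M).mulVec x) A := by
    simp only [dotProduct]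
    exact DifferentiableAt.fun_sum fun k _ => (differentiableAt_const _).fun_mul (hv k)
  refine ⟨?_, ?_, ?_⟩
  · -- differentiability
    simp only [Pi.smul_apply, smul_eq_mul]
    exact ((DifferentiableAt.fun_sum fun k _ =>
      ((differentiableAt_const (y k)).fun_sub ((hc.fun_inv h).fun_mul (hv k))).fun_pow 2).const_mul (1/2))
  · -- directional derivatives
    intro i j
    set c0 : ℝ := z ⬝ᵥ (B * A).mulVec x with hc0
    have hS : ∀ t : ℝ, z ⬝ᵥ (B * (A + t • single i j (1:ℝ))).mulVec x
        = c0 + t * ((∑ m, z m * B m i) * x j) := by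
      intro t
      rw [hc0]
      simp only [dotProduct]
      simp only [keyline]
      simp only [mul_add, Finset.sum_add_distrib]
      congr 1
      rw [Finset.sum_mul, Finset.mul_sum]
      exact Finset.sum_congr rfl fun k _ => by ring
    set d : ℝ := (∑ m, z m * B m i) * x j with hd
    have hfun : (fun t : ℝ =>
        (1 / 2) * ∑ k, (y k -
          ((z ⬝ᵥ (B * (A + t • single i j (1 : ℝ))).mulVec x)⁻¹ •
            (B * (A + t • single i j (1 : ℝ))).mulVec x) k) ^ 2)
        = fun t : ℝ => (1/2) * ∑ k,
            (y k - (c0 + t * d)⁻¹ * ((B * A).mulVec x k + t * (B k i * x j))) ^ 2 := by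
      funext t
      simp only [Pi.smul_apply, smul_eq_mul, keyline, hS]
    have hlin : ∀ (a b : ℝ), HasDerivAt (fun t : ℝ => a + t * b) b 0 := by
      intro a b
      simpa using ((hasDerivAt_id (0:ℝ)).mul_const b).const_add a
    have hzero : c0 + 0 * d ≠ 0 := by simpa using h
    have hterm : ∀ k : Fin n, HasDerivAt
        (fun t : ℝ => (y k - (c0 + t * d)⁻¹ * ((B * A).mulVec x k + t * (B k i * x j))) ^ 2)
        (2 * (y k - c0⁻¹ * (B * A).mulVec x k) *
          (0 - ((-d / c0 ^ 2) * (B * A).mulVec x k + c0⁻¹ * (B k i * x j)))) 0 := by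
      intro k
      have h1 : HasDerivAt
          (fun t : ℝ => (c0 + t * d)⁻¹ * ((B * A).mulVec x k + t * (B k i * x j)))
          ((-d / c0 ^ 2) * (B * A).mulVec x k + c0⁻¹ * (B k i * x j)) 0 := by
        have := ((hlin c0 d).fun_inv hzero).fun_mul (hlin ((B * A).mulVec x k) (B k i * x j))
        simpa using this
      have h2 := ((hasDerivAt_const (0:ℝ) (y k)).fun_sub h1).fun_pow 2
      simpa using h2
    have key := (HasDerivAt.fun_sum (fun k (_ : k ∈ Finset.univ) => hterm k)).const_mul
      ((1:ℝ)/2)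
    rw [hfun]
    convert key using 1
    case e'_4 => rfl
    case e'_5 => rfl
    -- value equality
    rw [hG₁]
    simp only [vecMulVec_apply, Matrix.mulVec, dotProduct, Matrix.smul_apply,
      Matrix.sub_apply, Pi.sub_apply, smul_eq_mul, Matrix.transpose_apply, keymat, hy,
      Pi.smul_apply]
    rw [Finset.sum_mul, Finset.mul_sum]
    refine Finset.sum_congr rfl fun k _ => ?_
    rw [hd]
    field_simp
    ring
  · -- G₁ = G₂
    have hinner : ((z ⬝ᵥ (B * A).mulVec x) ^ 2)⁻¹ •
        (Bᵀ * vecMulVec z x * Aᵀ * Bᵀ - (z ⬝ᵥ (B * A).mulVec x) • Bᵀ)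
        = Bᵀ * ((z ⬝ᵥ (B * A).mulVec x)⁻¹ • (vecMulVec z yhat - 1)) := by
      ext i k
      simp only [Matrix.smul_apply, Matrix.sub_apply, keymat, Matrix.transpose_apply,
        smul_eq_mul]
      simp only [Matrix.mul_apply, Matrix.smul_apply, Matrix.sub_apply, vecMulVec_apply,
        Matrix.one_apply, hy, Pi.smul_apply, smul_eq_mul, Matrix.transpose_apply, mul_sub,
        mul_ite, mul_one, mul_zero, Finset.sum_sub_distrib, Finset.sum_ite_eq',
        Finset.mem_univ, if_true]
      have hpull : ∑ m, B m i * ((z ⬝ᵥ (B * A).mulVec x)⁻¹ *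
          (z m * ((z ⬝ᵥ (B * A).mulVec x)⁻¹ * (B * A).mulVec x k)))
          = (∑ m, z m * B m i) * ((z ⬝ᵥ (B * A).mulVec x)⁻¹ *
            ((z ⬝ᵥ (B * A).mulVec x)⁻¹ * (B * A).mulVec x k)) := by
        rw [Finset.sum_mul]
        exact Finset.sum_congr rfl fun m _ => by ring
      rw [hpull]
      field_simp
    rw [hG₁, hG₂, hinner]
end

section
/- Let n, h be positive integers, let x, z, y ∈ ℝⁿ, and let B₁, B₂, ..., B_h be real n×n matrices. Define states recursively by q̂₁ = x and q̂_{s+1} = (B_s q̂_s)/(zᵀ B_s q̂_s) for 1 ≤ s ≤ h, and suppose zᵀ B_s q̂_s ≠ 0 for every 1 ≤ s ≤ h. Let C = B_h B_{h−1} ⋯ B₂ (with C = I when h = 1). Then the function g(A) = (1/2)‖y − (C A x)/(zᵀ C A x)‖₂², which is well defined near A = B₁ since zᵀ C B₁ x ≠ 0, is differentiable at A = B₁, and its gradient matrix at B₁ equals Cᵀ ((z q̂_{h+1}ᵀ − I)/(zᵀ C B₁ x)) (y − q̂_{h+1}) xᵀ, where I is the n×n identity matrix and q̂_{h+1} = (C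 B₁ x)/(zᵀ C B₁ x). -/
open Matrix

attribute [local instance] Matrix.normedAddCommGroup Matrix.normedSpace

/-- Lemma 2 (h-step inference gradient): with states produced by the
normalized PSR updates with operators `B 1, …, B h`, and `C = B h ⋯ B 2`
(with `C = I` when `h = 1`), the loss `g(A) = (1/2) ‖y − (CAx)/(zᵀCAx)‖²`
is well defined near `A = B 1` (i.e. `zᵀ C B₁ x ≠ 0`), is differentiable
there, and its gradient matrix at `B 1` equals
`Cᵀ ((z q̂_{h+1}ᵀ − I)/(zᵀ C B₁ x)) (y − q̂_{h+1}) xᵀ` where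
`q̂_{h+1} = (C B₁ x)/(zᵀ C B₁ x)`. -/
theorem h_step_inference_gradient (n h : ℕ) (hn : 0 < n) (hh : 0 < h)
    (x z y : Fin n → ℝ)
    (B : ℕ → Matrix (Fin n) (Fin n) ℝ)
    (q : ℕ → Fin n → ℝ) (hq1 : q 1 = x)
    (hrec : ∀ s, 1 ≤ s → s ≤ h →
      q (s + 1) = (z ⬝ᵥ (B s).mulVec (q s))⁻¹ • (B s).mulVec (q s))
    (hnz : ∀ s, 1 ≤ s → s ≤ h → z ⬝ᵥ (B s).mulVec (q s) ≠ 0)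
    (C : Matrix (Fin n) (Fin n) ℝ)
    (hC : C = ((List.range (h - 1)).map (fun s => B (h - s))).prod)
    (G : Matrix (Fin n) (Fin n) ℝ)
    (hG : G = vecMulVec
      ((Cᵀ * ((z ⬝ᵥ (C * B 1).mulVec x)⁻¹ •
        (vecMulVec z (q (h + 1)) - 1))).mulVec (y - q (h + 1))) x) :
    z ⬝ᵥ (C * B 1).mulVec x ≠ 0 ∧
    q (h + 1) = (z ⬝ᵥ (C * B 1).mulVec x)⁻¹ • (C * B 1).mulVec x ∧
    DifferentiableAt ℝ
      (fun M : Matrix (Fin n) (Fin n) ℝ =>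
        (1 / 2) * ∑ k, (y k -
          ((z ⬝ᵥ (C * M).mulVec x)⁻¹ • (C * M).mulVec x) k) ^ 2) (B 1) ∧
    (∀ i j, HasDerivAt
      (fun t : ℝ =>
        (1 / 2) * ∑ k, (y k -
          ((z ⬝ᵥ (C * (B 1 + t • Matrix.single i j (1 : ℝ))).mulVec x)⁻¹ •
            (C * (B 1 + t • Matrix.single i j (1 : ℝ))).mulVec x) k) ^ 2)
      (G i j) 0) := by
  -- Step 1: the state after s steps is the normalized product of the operators
  have main : ∀ s, 1 ≤ s → s ≤ h →
      z ⬝ᵥ (((List.range s).map (fun t => B (s - t))).prod).mulVec x ≠ 0 ∧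
      q (s + 1) = (z ⬝ᵥ (((List.range s).map (fun t => B (s - t))).prod).mulVec x)⁻¹ •
        (((List.range s).map (fun t => B (s - t))).prod).mulVec x := by
    intro s
    induction s with
    | zero => omega
    | succ m ih =>
      intro _ hsh
      rcases Nat.eq_or_lt_of_le (Nat.one_le_iff_ne_zero.mpr (Nat.succ_ne_zero m)) with h1 | h1
      · -- m = 0
        obtain rfl : m = 0 := by omega
        have e : ((List.range 1).map (fun t => B (1 - t))).prod = B 1 := by
          rw [show List.range 1 = [0] from rfl, List.map_singleton, List.prod_singleton]
        rw [e]
        have h1' := hnz 1 le_rfl hsh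
        have h2' := hrec 1 le_rfl hsh
        rw [hq1] at h1' h2'
        exact ⟨h1', h2'⟩
      · -- m ≥ 1
        have hm1 : 1 ≤ m := by omega
        have hmh : m ≤ h := by omega
        obtain ⟨hne, hq⟩ := ih hm1 hmh
        set P : Matrix (Fin n) (Fin n) ℝ := ((List.range m).map (fun t => B (m - t))).prod with hP
        have estep : ((List.range (m+1)).map (fun t => B (m + 1 - t))).prod = B (m+1) * P := by
          rw [List.range_succ_eq_map]
          simp only [List.map_map, List.map_cons, List.prod_cons, Nat.sub_zero]
          congr 2
          apply List.map_congr_left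
          intro t _
          simp [Function.comp, Nat.succ_sub_succ]
        rw [estep]
        set c : ℝ := z ⬝ᵥ P.mulVec x with hc
        have hBq : (B (m+1)).mulVec (q (m+1)) = c⁻¹ • (B (m+1) * P).mulVec x := by
          rw [hq, mulVec_smul, ← mulVec_mulVec]
        have hzBq : z ⬝ᵥ (B (m+1)).mulVec (q (m+1)) = c⁻¹ * (z ⬝ᵥ (B (m+1) * P).mulVec x) := by
          rw [hBq, dotProduct_smul, smul_eq_mul]
        have hnz' := hnz (m+1) (by omega) hsh
        have hd : z ⬝ᵥ (B (m+1) * P).mulVec x ≠ 0 := by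
          intro h0
          rw [hzBq, h0, mul_zero] at hnz'
          exact hnz' rfl
        refine ⟨hd, ?_⟩
        rw [hrec (m+1) (by omega) hsh, hBq, dotProduct_smul, smul_eq_mul, mul_inv, inv_inv,
          smul_smul]
        congr 1
        rw [mul_comm c _, mul_assoc, mul_inv_cancel₀ hne, mul_one]
  -- the full product equals C * B 1
  have hCB : ((List.range h).map (fun t => B (h - t))).prod = C * B 1 := by
    obtain ⟨m, rfl⟩ : ∃ m, h = m + 1 := ⟨h - 1, (Nat.succ_pred_eq_of_pos hh).symm⟩
    rw [List.range_succ, hC]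
    simp
  obtain ⟨ha, hqh⟩ := main h hh le_rfl
  rw [hCB] at ha hqh
  refine ⟨ha, hqh, ?_, ?_⟩
  · -- differentiability
    have hentry : ∀ (p r : Fin n),
        DifferentiableAt ℝ (fun M : Matrix (Fin n) (Fin n) ℝ => M p r) (B 1) := by
      intro p r
      exact (((ContinuousLinearMap.proj r : (Fin n → ℝ) →L[ℝ] ℝ).differentiableAt).comp (B 1)
        ((ContinuousLinearMap.proj p :
          (Fin n → Fin n → ℝ) →L[ℝ] (Fin n → ℝ)).differentiableAt))
    have hNk : ∀ k, DifferentiableAt ℝ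
        (fun M : Matrix (Fin n) (Fin n) ℝ => ((C * M).mulVec x) k) (B 1) := by
      intro k
      simp only [mulVec, dotProduct, Matrix.mul_apply]
      exact DifferentiableAt.fun_sum fun l _ =>
        (DifferentiableAt.fun_sum fun m _ => (hentry m l).const_mul _).mul_const _
    have hd : DifferentiableAt ℝ
        (fun M : Matrix (Fin n) (Fin n) ℝ => z ⬝ᵥ (C * M).mulVec x) (B 1) := by
      simp only [dotProduct]
      exact DifferentiableAt.fun_sum fun k _ => (hNk k).const_mul _
    apply DifferentiableAt.const_mul
    apply DifferentiableAt.fun_sum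
    intro k _
    simp only [Pi.smul_apply, smul_eq_mul]
    exact (((differentiableAt_const _).sub ((hd.inv ha).mul (hNk k))).pow 2)
  · -- the directional derivatives
    intro i j
    rw [hG, hqh]
    set E : Matrix (Fin n) (Fin n) ℝ := Matrix.single i j (1 : ℝ) with hE
    set v : Fin n → ℝ := (C * B 1).mulVec x with hv
    set w : Fin n → ℝ := (C * E).mulVec x with hw0
    set a : ℝ := z ⬝ᵥ v with hav
    set b : ℝ := z ⬝ᵥ w with hbv
    have key : ∀ t : ℝ, (C * (B 1 + t • E)).mulVec x = v + t • w := by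
      intro t
      rw [mul_add, add_mulVec, Matrix.mul_smul, smul_mulVec]
    have keyz : ∀ t : ℝ, z ⬝ᵥ (C * (B 1 + t • E)).mulVec x = a + t * b := by
      intro t
      rw [key t, dotProduct_add, dotProduct_smul, smul_eq_mul]
    have hwk : ∀ k, w k = C k i * x j := by
      intro k
      rw [hw0, ← mulVec_mulVec, hE, single_mulVec]
      simp [mulVec, dotProduct, Function.update_apply, mul_ite]
    have hb : b = (∑ l, z l * C l i) * x j := by
      rw [hbv]
      simp only [dotProduct, hwk, Finset.sum_mul]
      exact Finset.sum_congr rfl fun l _ => by ring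
    have h1 : HasDerivAt (fun t : ℝ => a + t * b) b 0 := by
      simpa using ((hasDerivAt_id (0:ℝ)).mul_const b).const_add a
    have ha0 : a + (0 : ℝ) * b ≠ 0 := by simpa using ha
    have h2 := h1.inv ha0
    have h3 : ∀ k, HasDerivAt (fun t : ℝ => v k + t * w k) (w k) 0 := fun k => by
      simpa using ((hasDerivAt_id (0:ℝ)).mul_const (w k)).const_add (v k)
    have h4 : ∀ k, HasDerivAt (fun t : ℝ => (a + t * b)⁻¹ * (v k + t * w k))
        (-b / (a + 0 * b) ^ 2 * (v k + 0 * w k) + (a + 0 * b)⁻¹ * w k) 0 := fun k =>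
      h2.mul (h3 k)
    have h5 : ∀ k, HasDerivAt (fun t : ℝ => (y k - (a + t * b)⁻¹ * (v k + t * w k)) ^ 2)
        (2 * (y k - (a + 0 * b)⁻¹ * (v k + 0 * w k)) ^ 1 *
          (0 - (-b / (a + 0 * b) ^ 2 * (v k + 0 * w k) + (a + 0 * b)⁻¹ * w k))) 0 := fun k =>
      (((hasDerivAt_const (0:ℝ) (y k)).sub (h4 k)).pow 2)
    have hsum := HasDerivAt.fun_sum (fun k (_ : k ∈ Finset.univ) => h5 k)
    have hfinal := hsum.const_mul (1/2 : ℝ)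
    have hfun : (fun t : ℝ =>
          (1 / 2) * ∑ k, (y k -
            ((z ⬝ᵥ (C * (B 1 + t • E)).mulVec x)⁻¹ •
              (C * (B 1 + t • E)).mulVec x) k) ^ 2) =
        (fun t : ℝ => (1/2 : ℝ) * ∑ k, (y k - (a + t * b)⁻¹ * (v k + t * w k)) ^ 2) := by
      funext t
      rw [keyz t]
      congr 1
      apply Finset.sum_congr rfl
      intro k _
      rw [key t]
      simp [Pi.smul_apply, smul_eq_mul]
    rw [hfun]
    convert hfinal using 1
    case e'_4 => rfl
    case e'_5 => rfl
    rw [vecMulVec_apply]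
    rw [Finset.mul_sum]
    simp only [mulVec, dotProduct, Matrix.mul_apply, Matrix.transpose_apply, Matrix.sub_apply,
      Matrix.vecMulVec_apply, Matrix.smul_apply, Matrix.one_apply, Pi.sub_apply, Pi.smul_apply,
      smul_eq_mul, zero_mul, mul_zero, add_zero, pow_one, zero_sub, hwk, hb, ← hav]
    rw [Finset.sum_mul]
    apply Finset.sum_congr rfl
    intro k _
    have hinner : (∑ l, C l i * (a⁻¹ * (z l * (a⁻¹ * v k) - if l = k then 1 else 0)))
        = a⁻¹ * (a⁻¹ * v k) * (∑ l, z l * C l i) - a⁻¹ * C k i := by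
      have : ∀ l : Fin n, C l i * (a⁻¹ * (z l * (a⁻¹ * v k) - if l = k then 1 else 0))
          = a⁻¹ * (a⁻¹ * v k) * (z l * C l i) - a⁻¹ * (if l = k then C l i else 0) := by
        intro l; split_ifs <;> ring
      rw [Finset.sum_congr rfl fun l _ => this l, Finset.sum_sub_distrib, ← Finset.mul_sum,
        ← Finset.mul_sum, Finset.sum_ite_eq' Finset.univ k (fun l => C l i)]
      simp
    rw [hinner]
    field_simp
    ring
end
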